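/- Let l = a²(2b² + 2c² − a²)/Δ, where Δ = (a+b+c)(b+c−a)(c+a−b)(a+b−c). Then (dist aB aC)² = l·a², (dist aC aA)² = l·b², and (dist aA aB)² = l·c²; hence triangle aA aB aC is similar to triangle ABC. -/

import Mathlib

open EuclideanGeometry RealInnerProductSpace

set_option maxHeartbeats 1000000000 in
theorem triangle_aA_aB_aC_similar
    (A B C O aA aB aC : EuclideanSpace ℝ (Fin 2))
    (hABC : AffineIndependent ℝ ![A, B, C])
    (a b c : ℝ) (ha : a = dist B C) (hb : b = dist C A) (hc : c = dist A B)
    (hO : O = (⟨![A, B, C], hABC⟩ : Affine.Triangle ℝ (EuclideanSpace ℝ (Fin 2))).circumcenter)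
    (haA : aA = EuclideanGeometry.reflection (affineSpan ℝ {B, C}) O)
    (haB1 : dist aB A = dist aB B) (haB2 : ⟪aB - B, C - B⟫ = 0)
    (haC1 : dist aC A = dist aC C) (haC2 : ⟪aC - C, B - C⟫ = 0)
    (l : ℝ)
    (hl : l = a^2 * (2*b^2 + 2*c^2 - a^2) / ((a+b+c)*(b+c-a)*(c+a-b)*(a+b-c))) :
    ((dist aB aC)^2 = l * a^2 ∧ (dist aC aA)^2 = l * b^2 ∧ (dist aA aB)^2 = l * c^2) ∧
    ∃ r : ℝ, 0 < r ∧ dist aB aC = r * dist B C ∧ dist aC aA = r * dist C A ∧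
      dist aA aB = r * dist A B := by
  have hBC : B ≠ C := by
    intro h
    exact absurd (hABC.injective (by simp [h] : ![A,B,C] 1 = ![A,B,C] 2)) (by decide)
  have hapos : 0 < a := ha ▸ dist_pos.mpr hBC
  set Δ := (a+b+c)*(b+c-a)*(c+a-b)*(a+b-c) with hΔdef
  set u : EuclideanSpace ℝ (Fin 2) := A - B with hu
  set w : EuclideanSpace ℝ (Fin 2) := C - B with hw
  have dist_sq : ∀ p q : EuclideanSpace ℝ (Fin 2), dist p q ^ 2 = ⟪p - q, p - q⟫ := by
    intro p q; rw [dist_eq_norm, real_inner_self_eq_norm_sq]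
  have iexp : ∀ x y x' y' : ℝ,
      ⟪x•u + y•w, x'•u + y'•w⟫ = x*x'*⟪u,u⟫ + (x*y'+y*x')*⟪u,w⟫ + y*y'*⟪w,w⟫ := by
    intro x y x' y'
    simp only [inner_add_left, inner_add_right, real_inner_smul_left, real_inner_smul_right,
      real_inner_comm w u]
    ring
  have iexp2 : ∀ x y : ℝ, ⟪x•u + y•w, w⟫ = x*⟪u,w⟫ + y*⟪w,w⟫ := by
    intro x y
    simp only [inner_add_left, real_inner_smul_left]
  have huu : ⟪u,u⟫ = c^2 := by rw [hu, ← dist_sq A B, hc]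
  have hww : ⟪w,w⟫ = a^2 := by rw [hw, ← dist_sq C B, dist_comm C B, ha]
  have hkv : ⟪u,w⟫ = (a^2+c^2-b^2)/2 := by
    have hb2 : ⟪u - w, u - w⟫ = b^2 := by
      rw [hu, hw, show A - B - (C - B) = A - C from by abel, ← dist_sq A C, dist_comm A C, hb]
    have hex : ⟪u - w, u - w⟫ = ⟪u,u⟫ - 2*⟪u,w⟫ + ⟪w,w⟫ := by
      simp only [inner_sub_left, inner_sub_right, real_inner_comm w u]; ring
    rw [hex, huu, hww] at hb2
    linarith
  have hnw : ∀ t : ℝ, t • w ≠ u := by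
    intro t h
    rw [affineIndependent_iff_not_collinear_set] at hABC
    apply hABC
    apply collinear_insert_of_mem_affineSpan_pair
    have h2 := smul_vsub_vadd_mem_affineSpan_pair t B C
    convert h2 using 2
    rw [vsub_eq_sub, vadd_eq_add]
    rw [hw, hu] at h
    linear_combination (norm := abel) h.symm
  have hw0 : w ≠ 0 := by rw [hw]; exact sub_ne_zero.mpr hBC.symm
  have hspan : ∀ z : EuclideanSpace ℝ (Fin 2), ∃ x y : ℝ, x • u + y • w = z := by
    intro z
    have hli : LinearIndependent ℝ ![u, w] := by
      rw [linearIndependent_fin2]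
      exact ⟨by simpa using hw0, by simpa using hnw⟩
    have htop := hli.span_eq_top_of_card_eq_finrank (by simp)
    have hr : Set.range ![u, w] = {u, w} := by
      simp [Matrix.range_cons, Matrix.range_empty, Set.pair_comm]
    refine Submodule.mem_span_pair.mp ?_
    rw [← hr, htop]; trivial
  have ha2 : a^2 ≠ 0 := ne_of_gt (pow_pos hapos 2)
  have hDpos : 0 < a^2*c^2 - ((a^2+c^2-b^2)/2)^2 := by
    have hvne : (a^2)•u + (-((a^2+c^2-b^2)/2))•w ≠ 0 := by
      intro hvz
      apply hnw (((a^2+c^2-b^2)/2)/a^2)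
      have h1 : (a^2)•u = ((a^2+c^2-b^2)/2)•w := by
        rwa [add_eq_zero_iff_eq_neg, neg_smul, neg_neg] at hvz
      rw [div_eq_inv_mul, mul_smul, ← h1, smul_smul, inv_mul_cancel₀ ha2, one_smul]
    have h : (0:ℝ) < ⟪(a^2)•u + (-((a^2+c^2-b^2)/2))•w, (a^2)•u + (-((a^2+c^2-b^2)/2))•w⟫ := by
      rw [real_inner_self_eq_norm_sq]
      exact pow_pos (norm_pos_iff.mpr hvne) 2
    rw [iexp, huu, hww, hkv] at h
    have h2 : 0 < a^2 * (a^2*c^2 - ((a^2+c^2-b^2)/2)^2) := by linarith [h]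
    rcases mul_pos_iff.mp h2 with ⟨_, h3⟩ | ⟨h3, _⟩
    · exact h3
    · linarith [pow_pos hapos 2]
  have hΔpos : 0 < Δ := by rw [hΔdef]; linarith [hDpos]
  have hΔ0 : Δ ≠ 0 := ne_of_gt hΔpos
  have hΔe0 : (a+b+c)*(b+c-a)*(c+a-b)*(a+b-c) ≠ 0 := hΔdef ▸ hΔ0
  -- aB
  obtain ⟨x₁, y₁, hB1⟩ := hspan (aB - B)
  have hB1A : aB - A = (x₁-1)•u + y₁•w := by
    have h : aB - A = (aB - B) - u := by rw [hu]; abel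
    rw [h, ← hB1]; module
  have d1 : (dist aB A)^2 = (dist aB B)^2 := by rw [haB1]
  rw [dist_sq, dist_sq, hB1A, ← hB1, iexp, iexp, huu, hww, hkv] at d1
  rw [← hB1, iexp2, hkv, hww] at haB2
  have e1 : 2*x₁*c^2 + y₁*(a^2+c^2-b^2) = c^2 := by linear_combination -d1
  have e2 : x₁*(a^2+c^2-b^2) + 2*y₁*a^2 = 0 := by linear_combination 2*haB2
  have hX₁ : x₁*Δ = 2*a^2*c^2 := by
    rw [hΔdef]; linear_combination 2*a^2*e1 - (a^2+c^2-b^2)*e2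
  have hY₁ : y₁*Δ = -(c^2*(a^2+c^2-b^2)) := by
    rw [hΔdef]; linear_combination -(a^2+c^2-b^2)*e1 + 2*c^2*e2
  -- aC
  obtain ⟨x₂, y₂, hC1⟩ := hspan (aC - B)
  have hC1A : aC - A = (x₂-1)•u + y₂•w := by
    have h : aC - A = (aC - B) - u := by rw [hu]; abel
    rw [h, ← hC1]; module
  have hC1C : aC - C = x₂•u + (y₂-1)•w := by
    have h : aC - C = (aC - B) - w := by rw [hw]; abel
    rw [h, ← hC1]; module
  have d3 : (dist aC A)^2 = (dist aC C)^2 := by rw [haC1]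
  rw [dist_sq, dist_sq, hC1A, hC1C, iexp, iexp, huu, hww, hkv] at d3
  rw [hC1C, show B - C = -w from by rw [hw]; abel, inner_neg_right, iexp2, hkv, hww] at haC2
  have e3 : (2*x₂-1)*c^2 + (y₂-x₂)*(a^2+c^2-b^2) + (1-2*y₂)*a^2 = 0 := by
    linear_combination -d3
  have e4 : x₂*(a^2+c^2-b^2) + 2*(y₂-1)*a^2 = 0 := by linear_combination -2*haC2
  have hX₂ : x₂*Δ = 2*a^2*b^2 := by
    rw [hΔdef]; linear_combination 2*a^2*e3 + (a^2-c^2+b^2)*e4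
  have hY₂ : y₂*Δ = Δ - b^2*(a^2+c^2-b^2) := by
    rw [hΔdef]; linear_combination -(a^2+c^2-b^2)*e3 + (c^2-a^2+b^2)*e4
  -- O
  obtain ⟨x₃, y₃, hO1⟩ := hspan (O - B)
  have hO1A : O - A = (x₃-1)•u + y₃•w := by
    have h : O - A = (O - B) - u := by rw [hu]; abel
    rw [h, ← hO1]; module
  have hO1C : O - C = x₃•u + (y₃-1)•w := by
    have h : O - C = (O - B) - w := by rw [hw]; abel
    rw [h, ← hO1]; module
  have hcirc := fun i => (⟨![A, B, C], hABC⟩ :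
    Affine.Triangle ℝ (EuclideanSpace ℝ (Fin 2))).dist_circumcenter_eq_circumradius i
  have h0 := hcirc 0; have h1 := hcirc 1; have h2 := hcirc 2
  simp only [Affine.Simplex.points, Matrix.cons_val_zero, Matrix.cons_val_one, Matrix.head_cons,
    Matrix.cons_val_two, Matrix.tail_cons] at h0 h1 h2
  rw [← hO] at h0 h1 h2
  have d5 : (dist O A)^2 = (dist O B)^2 := by
    rw [dist_comm O A, dist_comm O B, h0, h1]
  have d6 : (dist O C)^2 = (dist O B)^2 := by
    rw [dist_comm O C, dist_comm O B, h2, h1]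
  rw [dist_sq, dist_sq, hO1A, ← hO1, iexp, iexp, huu, hww, hkv] at d5
  rw [dist_sq, dist_sq, hO1C, ← hO1, iexp, iexp, huu, hww, hkv] at d6
  have e5 : 2*x₃*c^2 + y₃*(a^2+c^2-b^2) = c^2 := by linear_combination -d5
  have e6 : x₃*(a^2+c^2-b^2) + 2*y₃*a^2 = a^2 := by linear_combination -d6
  have hX₃ : x₃*Δ = a^2*(b^2+c^2-a^2) := by
    rw [hΔdef]; linear_combination 2*a^2*e5 - (a^2+c^2-b^2)*e6
  have hY₃ : y₃*Δ = c^2*(a^2+b^2-c^2) := by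
    rw [hΔdef]; linear_combination -(a^2+c^2-b^2)*e5 + 2*c^2*e6
  -- aA as explicit reflection
  have hOp : O - ((1/2:ℝ)•w + B) = x₃•u + (y₃-1/2)•w := by
    have h : O - ((1/2:ℝ)•w + B) = (O - B) - (1/2:ℝ)•w := by abel
    rw [h, ← hO1]; module
  have hperp : ⟪B - C, O - ((1/2:ℝ)•w + B)⟫ = 0 := by
    have hBC' : B - C = (0:ℝ)•u + (-1:ℝ)•w := by rw [hw]; module
    rw [hBC', hOp, iexp, huu, hww, hkv]
    linear_combination -(1/2)*e6
  have haAval : aA = (((1/2:ℝ)•w + B) - O) + ((1/2:ℝ)•w + B) := by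
    set p : EuclideanSpace ℝ (Fin 2) := (1/2:ℝ)•w + B with hp
    have hm : p ∈ affineSpan ℝ {B, C} := by
      have := smul_vsub_vadd_mem_affineSpan_pair (1/2 : ℝ) B C
      simpa [vsub_eq_sub, vadd_eq_add, hp, ← hw] using this
    have hv : O -ᵥ p ∈ (affineSpan ℝ {B, C}).directionᗮ := by
      rw [direction_affineSpan, vectorSpan_pair, Submodule.mem_orthogonal_singleton_iff_inner_right]
      simpa [vsub_eq_sub] using hperp
    have hproj : (EuclideanGeometry.orthogonalProjection (affineSpan ℝ {B, C}) O
        : EuclideanSpace ℝ (Fin 2)) = p := by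
      have h := orthogonalProjection_vadd_eq_self hm hv
      rw [vsub_vadd] at h
      rw [h]
    rw [haA, EuclideanGeometry.reflection_apply', hproj, vsub_eq_sub, vadd_eq_add]
  have hA1 : aA - B = (-x₃)•u + (1-y₃)•w := by
    have h : aA - B = (1:ℝ)•w - (O - B) := by rw [haAval]; module
    rw [h, ← hO1]; module
  -- final distance computations
  have hd12 : aB - aC = (x₁-x₂)•u + (y₁-y₂)•w := by
    have h : aB - aC = (aB - B) - (aC - B) := by abel
    rw [h, ← hB1, ← hC1]; module
  have hd23 : aC - aA = (x₂+x₃)•u + (y₂-1+y₃)•w := by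
    have h : aC - aA = (aC - B) - (aA - B) := by abel
    rw [h, ← hC1, hA1]; module
  have hd31 : aA - aB = (-x₃-x₁)•u + (1-y₃-y₁)•w := by
    have h : aA - aB = (aA - B) - (aB - B) := by abel
    rw [h, hA1, ← hB1]; module
  have hXd1 : (x₁-x₂)*Δ = 2*a^2*c^2 - 2*a^2*b^2 := by linear_combination hX₁ - hX₂
  have hYd1 : (y₁-y₂)*Δ = b^2*(a^2+c^2-b^2) - c^2*(a^2+c^2-b^2) - Δ := by linear_combination hY₁ - hY₂
  have hQ1 : (dist aB aC)^2 * Δ^2 = (2*a^2*c^2 - 2*a^2*b^2)^2*c^2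
      + (2*a^2*c^2 - 2*a^2*b^2)*(b^2*(a^2+c^2-b^2) - c^2*(a^2+c^2-b^2) - Δ)*(a^2+c^2-b^2) + (b^2*(a^2+c^2-b^2) - c^2*(a^2+c^2-b^2) - Δ)^2*a^2 := by
    rw [dist_sq, hd12, iexp, huu, hww, hkv]
    linear_combination (((x₁-x₂)*Δ + (2*a^2*c^2 - 2*a^2*b^2))*c^2 + (b^2*(a^2+c^2-b^2) - c^2*(a^2+c^2-b^2) - Δ)*(a^2+c^2-b^2))*hXd1
      + (((x₁-x₂)*Δ)*(a^2+c^2-b^2) + ((y₁-y₂)*Δ + (b^2*(a^2+c^2-b^2) - c^2*(a^2+c^2-b^2) - Δ))*a^2)*hYd1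
  have hfin1 : (2*a^2*c^2 - 2*a^2*b^2)^2*c^2 + (2*a^2*c^2 - 2*a^2*b^2)*(b^2*(a^2+c^2-b^2) - c^2*(a^2+c^2-b^2) - Δ)*(a^2+c^2-b^2) + (b^2*(a^2+c^2-b^2) - c^2*(a^2+c^2-b^2) - Δ)^2*a^2
      = a^2*(2*b^2+2*c^2-a^2)*a^2*Δ := by rw [hΔdef]; ring
  have g1 : (dist aB aC)^2 = l * a^2 := by
    rw [hl, div_mul_eq_mul_div, eq_div_iff hΔ0]
    apply mul_right_cancel₀ hΔ0
    linear_combination hQ1 + hfin1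
  have hXd2 : (x₂+x₃)*Δ = 2*a^2*b^2 + a^2*(b^2+c^2-a^2) := by linear_combination hX₂ + hX₃
  have hYd2 : (y₂-1+y₃)*Δ = -(b^2*(a^2+c^2-b^2)) + c^2*(a^2+b^2-c^2) := by linear_combination hY₂ + hY₃
  have hQ2 : (dist aC aA)^2 * Δ^2 = (2*a^2*b^2 + a^2*(b^2+c^2-a^2))^2*c^2
      + (2*a^2*b^2 + a^2*(b^2+c^2-a^2))*(-(b^2*(a^2+c^2-b^2)) + c^2*(a^2+b^2-c^2))*(a^2+c^2-b^2) + (-(b^2*(a^2+c^2-b^2)) + c^2*(a^2+b^2-c^2))^2*a^2 := by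
    rw [dist_sq, hd23, iexp, huu, hww, hkv]
    linear_combination (((x₂+x₃)*Δ + (2*a^2*b^2 + a^2*(b^2+c^2-a^2)))*c^2 + (-(b^2*(a^2+c^2-b^2)) + c^2*(a^2+b^2-c^2))*(a^2+c^2-b^2))*hXd2
      + (((x₂+x₃)*Δ)*(a^2+c^2-b^2) + ((y₂-1+y₃)*Δ + (-(b^2*(a^2+c^2-b^2)) + c^2*(a^2+b^2-c^2)))*a^2)*hYd2
  have hfin2 : (2*a^2*b^2 + a^2*(b^2+c^2-a^2))^2*c^2 + (2*a^2*b^2 + a^2*(b^2+c^2-a^2))*(-(b^2*(a^2+c^2-b^2)) + c^2*(a^2+b^2-c^2))*(a^2+c^2-b^2) + (-(b^2*(a^2+c^2-b^2)) + c^2*(a^2+b^2-c^2))^2*a^2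
      = a^2*(2*b^2+2*c^2-a^2)*b^2*Δ := by rw [hΔdef]; ring
  have g2 : (dist aC aA)^2 = l * b^2 := by
    rw [hl, div_mul_eq_mul_div, eq_div_iff hΔ0]
    apply mul_right_cancel₀ hΔ0
    linear_combination hQ2 + hfin2
  have hXd3 : (-x₃-x₁)*Δ = -(a^2*(b^2+c^2-a^2)) - 2*a^2*c^2 := by linear_combination -hX₃ - hX₁
  have hYd3 : (1-y₃-y₁)*Δ = Δ - c^2*(a^2+b^2-c^2) + c^2*(a^2+c^2-b^2) := by linear_combination -hY₃ - hY₁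
  have hQ3 : (dist aA aB)^2 * Δ^2 = (-(a^2*(b^2+c^2-a^2)) - 2*a^2*c^2)^2*c^2
      + (-(a^2*(b^2+c^2-a^2)) - 2*a^2*c^2)*(Δ - c^2*(a^2+b^2-c^2) + c^2*(a^2+c^2-b^2))*(a^2+c^2-b^2) + (Δ - c^2*(a^2+b^2-c^2) + c^2*(a^2+c^2-b^2))^2*a^2 := by
    rw [dist_sq, hd31, iexp, huu, hww, hkv]
    linear_combination (((-x₃-x₁)*Δ + (-(a^2*(b^2+c^2-a^2)) - 2*a^2*c^2))*c^2 + (Δ - c^2*(a^2+b^2-c^2) + c^2*(a^2+c^2-b^2))*(a^2+c^2-b^2))*hXd3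
      + (((-x₃-x₁)*Δ)*(a^2+c^2-b^2) + ((1-y₃-y₁)*Δ + (Δ - c^2*(a^2+b^2-c^2) + c^2*(a^2+c^2-b^2)))*a^2)*hYd3
  have hfin3 : (-(a^2*(b^2+c^2-a^2)) - 2*a^2*c^2)^2*c^2 + (-(a^2*(b^2+c^2-a^2)) - 2*a^2*c^2)*(Δ - c^2*(a^2+b^2-c^2) + c^2*(a^2+c^2-b^2))*(a^2+c^2-b^2) + (Δ - c^2*(a^2+b^2-c^2) + c^2*(a^2+c^2-b^2))^2*a^2
      = a^2*(2*b^2+2*c^2-a^2)*c^2*Δ := by rw [hΔdef]; ring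
  have g3 : (dist aA aB)^2 = l * c^2 := by
    rw [hl, div_mul_eq_mul_div, eq_div_iff hΔ0]
    apply mul_right_cancel₀ hΔ0
    linear_combination hQ3 + hfin3
  -- positivity of l and similarity ratio
  have htpos : 0 < 2*b^2+2*c^2-a^2 := by
    have key : 0 < a^2*(2*b^2+2*c^2-a^2) := by
      have key2 : a^2*(2*b^2+2*c^2-a^2) = Δ + (b^2-c^2)^2 := by rw [hΔdef]; ring
      rw [key2]
      exact add_pos_of_pos_of_nonneg hΔpos (sq_nonneg _)
    rcases mul_pos_iff.mp key with ⟨_, h3⟩ | ⟨h3, _⟩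
    · exact h3
    · linarith [pow_pos hapos 2]
  have hlpos : 0 < l := by
    rw [hl]
    exact div_pos (mul_pos (pow_pos hapos 2) htpos) (hΔdef ▸ hΔpos)
  have hr2 : Real.sqrt l ^ 2 = l := Real.sq_sqrt hlpos.le
  have hrpos : 0 < Real.sqrt l := Real.sqrt_pos.mpr hlpos
  refine ⟨⟨g1, g2, g3⟩, Real.sqrt l, hrpos, ?_, ?_, ?_⟩
  · rw [← ha]
    refine (sq_eq_sq₀ dist_nonneg (mul_nonneg hrpos.le hapos.le)).mp ?_
    rw [g1, mul_pow, hr2]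
  · rw [← hb]
    refine (sq_eq_sq₀ dist_nonneg (mul_nonneg hrpos.le (hb ▸ dist_nonneg))).mp ?_
    rw [g2, mul_pow, hr2]
  · rw [← hc]
    refine (sq_eq_sq₀ dist_nonneg (mul_nonneg hrpos.le (hc ▸ dist_nonneg))).mp ?_
    rw [g3, mul_pow, hr2]
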